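/- For all natural numbers n and k, the number of bilateral Motzkin paths of length n with exactly k steps in {U, O1} equals binomial(n, k)². That is, the number of step words r : {1,...,n} → {U, D, O1, O2} whose heights satisfy H_n = 0 and which have exactly k steps equal to U or O1 is C(n,k)². -/

import Mathlib

/-- The four kinds of steps: up, down, and two colors of horizontal steps. -/
inductive Step where
  | U : Step
  | D : Step
  | O1 : Step
  | O2 : Step
deriving DecidableEq

instance : Fintype Step where
  elems := {Step.U, Step.D, Step.O1, Step.O2}
  complete := by intro x; cases x <;> simp

/-- Weight of a step: U has weight 1, D has weight −1, O1 and O2 weight 0. -/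
def Step.wt : Step → ℤ
  | .U => 1
  | .D => -1
  | .O1 => 0
  | .O2 => 0

/-- Height of a step word after its first `i` steps. -/
def stepHeight {n : ℕ} (r : Fin n → Step) (i : ℕ) : ℤ :=
  ∑ j ∈ Finset.univ.filter (fun j : Fin n => (j : ℕ) < i), (r j).wt

/-- Partial sum of a `±1`-sequence after its first `i` entries. -/
def partialSum {n : ℕ} (p : Fin n → ℤ) (i : ℕ) : ℤ :=
  ∑ j ∈ Finset.univ.filter (fun j : Fin n => (j : ℕ) < i), p j

/-- Decode a pair of sets into a step word. -/
def decodeStep {n : ℕ} (A B : Finset (Fin n)) (i : Fin n) : Step :=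
  if i ∈ A then (if i ∈ B then Step.O1 else Step.U)
  else (if i ∈ B then Step.D else Step.O2)

/-- The number of bilateral Motzkin paths of length $n$ with exactly $k$ steps
in $\{U, O_1\}$ is $\binom{n}{k}^2$. -/
theorem card_bilateralMotzkin (n k : ℕ) :
    Nat.card {r : Fin n → Step //
        stepHeight r n = 0 ∧
        (Finset.univ.filter fun i => r i = Step.U ∨ r i = Step.O1).card = k}
      = Nat.choose n k ^ 2 := by
  have key : ∀ r : Fin n → Step, stepHeight r n =
      ((Finset.univ.filter fun i => r i = Step.U ∨ r i = Step.O1).card : ℤ)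
      - ((Finset.univ.filter fun i => r i = Step.D ∨ r i = Step.O1).card : ℤ) := by
    intro r
    unfold stepHeight
    have h : Finset.univ.filter (fun j : Fin n => (j : ℕ) < n) = Finset.univ := by
      apply Finset.filter_true_of_mem
      intro j _; exact j.isLt
    rw [h, Finset.card_filter, Finset.card_filter]
    push_cast
    rw [← Finset.sum_sub_distrib]
    apply Finset.sum_congr rfl
    intro j _
    cases r j <;> simp [Step.wt]
  have e : {r : Fin n → Step //
        stepHeight r n = 0 ∧
        (Finset.univ.filter fun i => r i = Step.U ∨ r i = Step.O1).card = k} ≃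
      {p : Finset (Fin n) × Finset (Fin n) // p.1.card = k ∧ p.2.card = k} := by
    refine
      { toFun := fun r => ⟨(Finset.univ.filter fun i => r.1 i = Step.U ∨ r.1 i = Step.O1,
          Finset.univ.filter fun i => r.1 i = Step.D ∨ r.1 i = Step.O1), ?_, ?_⟩
        invFun := fun p => ⟨decodeStep p.1.1 p.1.2, ?_, ?_⟩
        left_inv := ?_
        right_inv := ?_ }
    · exact r.2.2
    · have h0 := r.2.1
      rw [key r.1] at h0
      have := r.2.2
      dsimp only
      omega
    · rw [key]
      have hA : (Finset.univ.filter fun i =>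
          decodeStep p.1.1 p.1.2 i = Step.U ∨ decodeStep p.1.1 p.1.2 i = Step.O1) = p.1.1 := by
        ext i
        simp only [Finset.mem_filter, Finset.mem_univ, true_and]; simp only [decodeStep]
        by_cases h1 : i ∈ p.1.1 <;> by_cases h2 : i ∈ p.1.2 <;> simp [h1, h2]
      have hB : (Finset.univ.filter fun i =>
          decodeStep p.1.1 p.1.2 i = Step.D ∨ decodeStep p.1.1 p.1.2 i = Step.O1) = p.1.2 := by
        ext i
        simp only [Finset.mem_filter, Finset.mem_univ, true_and]; simp only [decodeStep]
        by_cases h1 : i ∈ p.1.1 <;> by_cases h2 : i ∈ p.1.2 <;> simp [h1, h2]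
      rw [hA, hB, p.2.1, p.2.2]
      ring
    · have hA : (Finset.univ.filter fun i =>
          decodeStep p.1.1 p.1.2 i = Step.U ∨ decodeStep p.1.1 p.1.2 i = Step.O1) = p.1.1 := by
        ext i
        simp only [Finset.mem_filter, Finset.mem_univ, true_and]; simp only [decodeStep]
        by_cases h1 : i ∈ p.1.1 <;> by_cases h2 : i ∈ p.1.2 <;> simp [h1, h2]
      rw [hA, p.2.1]
    · intro r
      ext i
      simp only [decodeStep, Finset.mem_filter, Finset.mem_univ, true_and]
      cases h : r.1 i <;> simp [h]
    · intro p
      apply Subtype.ext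
      apply Prod.ext
      · ext i
        simp only [Finset.mem_filter, Finset.mem_univ, true_and]; simp only [decodeStep]
        by_cases h1 : i ∈ p.1.1 <;> by_cases h2 : i ∈ p.1.2 <;> simp [h1, h2]
      · ext i
        simp only [Finset.mem_filter, Finset.mem_univ, true_and]; simp only [decodeStep]
        by_cases h1 : i ∈ p.1.1 <;> by_cases h2 : i ∈ p.1.2 <;> simp [h1, h2]
  rw [Nat.card_congr e,
    Nat.card_congr (Equiv.subtypeProdEquivProd
      (p := fun A : Finset (Fin n) => A.card = k) (q := fun B : Finset (Fin n) => B.card = k)),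
    Nat.card_prod]
  have : Nat.card {A : Finset (Fin n) // A.card = k} = Nat.choose n k := by
    rw [Nat.card_eq_fintype_card]
    rw [Fintype.card_finset_len, Fintype.card_fin]
  rw [this]
  ring
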